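/- arXiv:1904.11667 — 2 statements merged into one kernel-verified Lean document; each statement's English description precedes it below -/
import Mathlib

section
/- Let s, r ≥ 0 and d ≥ 1 be integers with s + r + d ≥ 2, and let X ∈ E(s,r,d) have data (λ, Q, P, E). An affine map T(w) = a·w + b leaves X invariant if and only if a^{s−r−1} = 1 and the polynomial identities Q(a·w+b) = a^s·Q(w), P(a·w+b) = a^r·P(w) and E(a·w+b) = E(w) hold in ℂ[w]. Moreover, when these conditions hold one also has a^d = 1. -/
open Polynomial

noncomputable section

lemma coprime_of_no_common_root {Q P : Polynomial ℂ}
    (h : ∀ z : ℂ, ¬ (Q.IsRoot z ∧ P.IsRoot z)) : IsCoprime Q P := by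
  classical
  rw [← EuclideanDomain.gcd_isUnit_iff]
  by_contra hu
  obtain ⟨z, hz⟩ := IsAlgClosed.exists_root (EuclideanDomain.gcd Q P)
    (fun hdeg => hu (isUnit_iff_degree_eq_zero.mpr hdeg))
  exact h z ⟨eval_eq_zero_of_dvd_of_eval_eq_zero (EuclideanDomain.gcd_dvd_left Q P) hz,
    eval_eq_zero_of_dvd_of_eval_eq_zero (EuclideanDomain.gcd_dvd_right Q P) hz⟩

lemma no_shift_fix {p : Polynomial ℂ} {b : ℂ} (hb : b ≠ 0) (hp : p.natDegree ≠ 0)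
    (h : p.comp (X + C b) = p) : False := by
  have hp0 : p ≠ 0 := fun h0 => hp (by simp [h0])
  obtain ⟨z, hz⟩ := IsAlgClosed.exists_root p
    (fun hdeg => hp (natDegree_eq_zero_iff_degree_le_zero.mpr (le_of_eq hdeg)))
  have key : ∀ n : ℕ, p.IsRoot (z - n * b) := by
    intro n
    induction n with
    | zero => simpa using hz
    | succ n ih =>
      have h1 : (p.comp (X + C b)).eval (z - (n+1) * b) = p.eval (z - n * b) := by
        rw [eval_comp, eval_add, eval_X, eval_C]
        ring_nf
      rw [h] at h1
      unfold Polynomial.IsRoot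
      push_cast
      rw [h1]
      exact ih
  have hi : Function.Injective (fun n : ℕ => z - n * b) := by
    intro m n hmn
    simp only [sub_right_inj] at hmn
    have : (m : ℂ) = n := mul_right_cancel₀ hb hmn
    exact_mod_cast this
  exact (finite_setOf_isRoot hp0).not_infinite
    (Set.infinite_of_injective_forall_mem hi (fun n => key n))

lemma comp_linear_ne_zero {p : Polynomial ℂ} (hp : p ≠ 0) {a b : ℂ} (ha : a ≠ 0) :
    p.comp (C a * X + C b) ≠ 0 := by
  intro h0
  rcases comp_eq_zero_iff.mp h0 with h | ⟨-, hC⟩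
  · exact hp h
  · have h1 := congrArg natDegree hC
    rw [natDegree_linear ha, natDegree_C] at h1
    exact one_ne_zero h1

lemma comp_eq_C_mul {p : Polynomial ℂ} (hm : p.Monic) {a b : ℂ} (ha : a ≠ 0)
    (hdvd : p.comp (C a * X + C b) ∣ p) :
    p.comp (C a * X + C b) = C (a ^ p.natDegree) * p := by
  rcases Nat.eq_zero_or_pos p.natDegree with h0 | hpos
  · have h1 : p = 1 := hm.natDegree_eq_zero.mp h0
    simp [h1, h0]
  · obtain ⟨t, ht⟩ := hdvd
    have hc0 : p.comp (C a * X + C b) ≠ 0 := comp_linear_ne_zero hm.ne_zero ha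
    have ht0 : t ≠ 0 := by
      rintro rfl
      rw [mul_zero] at ht
      exact hm.ne_zero ht
    have hdeg : t.natDegree = 0 := by
      have h1 := congrArg natDegree ht
      rw [natDegree_mul hc0 ht0, natDegree_comp, natDegree_linear ha, mul_one] at h1
      omega
    have htC : t = C (t.coeff 0) := eq_C_of_natDegree_eq_zero hdeg
    have hlc : (p.comp (C a * X + C b)).leadingCoeff = a ^ p.natDegree := by
      rw [leadingCoeff_comp (by rw [natDegree_linear ha]; exact one_ne_zero),
        hm.leadingCoeff, one_mul, leadingCoeff_linear ha]
    have h1 : (1 : ℂ) = a ^ p.natDegree * t.coeff 0 := by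
      have h2 := congrArg leadingCoeff ht
      rw [hm.leadingCoeff, leadingCoeff_mul, hlc, htC, leadingCoeff_C] at h2
      exact h2
    calc p.comp (C a * X + C b)
        = C (a ^ p.natDegree * t.coeff 0) * p.comp (C a * X + C b) := by
          rw [← h1, map_one, one_mul]
      _ = C (a ^ p.natDegree) * (p.comp (C a * X + C b) * C (t.coeff 0)) := by
          rw [map_mul]; ring
      _ = C (a ^ p.natDegree) * p := by rw [← htC, ← ht]

lemma deriv_exp_eq {g h F : Polynomial ℂ} (hg : g ≠ 0) (hh : h ≠ 0)
    (hgh : g.natDegree = h.natDegree)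
    (heq : ∀ w : ℂ, g.eval w * Complex.exp (F.eval w) = h.eval w) :
    derivative F = 0 := by
  have key : ∀ w : ℂ, (derivative g).eval w * h.eval w
      + g.eval w * (derivative F).eval w * h.eval w = (derivative h).eval w * g.eval w := by
    intro w
    have h1 : HasDerivAt (fun x : ℂ => g.eval x * Complex.exp (F.eval x))
        ((derivative g).eval w * Complex.exp (F.eval w)
          + g.eval w * (Complex.exp (F.eval w) * (derivative F).eval w)) w :=
      (Polynomial.hasDerivAt g w).mul ((Polynomial.hasDerivAt F w).cexp)
    have h2 : HasDerivAt (fun x : ℂ => g.eval x * Complex.exp (F.eval x))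
        ((derivative h).eval w) w := by
      have h3 : (fun x : ℂ => g.eval x * Complex.exp (F.eval x)) = fun x : ℂ => h.eval x :=
        funext heq
      rw [h3]
      exact Polynomial.hasDerivAt h w
    have h3 := h1.unique h2
    have h5 : (derivative g).eval w * (g.eval w * Complex.exp (F.eval w))
        + g.eval w * (derivative F).eval w * (g.eval w * Complex.exp (F.eval w))
        = (derivative h).eval w * g.eval w := by rw [← h3]; ring
    rw [heq w] at h5
    exact h5
  have hpoly : derivative g * h + g * derivative F * h = derivative h * g :=
    Polynomial.funext (fun w => by simpa using key w)
  by_contra hF'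
  rcases Nat.eq_zero_or_pos g.natDegree with hn | hn
  · have hgC : derivative g = 0 := by
      rw [eq_C_of_natDegree_eq_zero hn]; exact derivative_C
    have hhn : h.natDegree = 0 := by omega
    have hhC : derivative h = 0 := by
      rw [eq_C_of_natDegree_eq_zero hhn]; exact derivative_C
    rw [hgC, hhC, zero_mul, zero_mul, zero_add] at hpoly
    exact mul_ne_zero (mul_ne_zero hg hF') hh hpoly
  · have heqpoly : g * derivative F * h = derivative h * g - derivative g * h := by
      linear_combination hpoly
    have hL0 : g * derivative F * h ≠ 0 := mul_ne_zero (mul_ne_zero hg hF') hh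
    have hdeg1 : (g * derivative F * h).natDegree
        = g.natDegree + (derivative F).natDegree + h.natDegree := by
      rw [natDegree_mul (mul_ne_zero hg hF') hh, natDegree_mul hg hF']
    have hb1 : (derivative h * g).natDegree ≤ g.natDegree + h.natDegree - 1 := by
      refine (natDegree_mul_le).trans ?_
      have := natDegree_derivative_le h
      omega
    have hb2 : (derivative g * h).natDegree ≤ g.natDegree + h.natDegree - 1 := by
      refine (natDegree_mul_le).trans ?_
      have := natDegree_derivative_le g
      omega
    have hb : (derivative h * g - derivative g * h).natDegree ≤ g.natDegree + h.natDegree - 1 :=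
      (natDegree_sub_le _ _).trans (by omega)
    rw [← heqpoly, hdeg1] at hb
    omega

/-- The data `(λ, Q, P, E)` of an element `X ∈ E(s,r,d)`:
`λ ≠ 0`, `Q`, `P` monic of degrees `s`, `r` with no common roots,
and `deg E = d`. -/
def EData (s r d : ℕ) (lam : ℂ) (Q P E : Polynomial ℂ) : Prop :=
  lam ≠ 0 ∧ Q.Monic ∧ P.Monic ∧ Q.natDegree = s ∧ P.natDegree = r ∧
    E.natDegree = d ∧ ∀ z : ℂ, ¬ (Q.IsRoot z ∧ P.IsRoot z)

/-- The affine map `T(w) = a·w + b` leaves the vector field with data `(λ,Q,P,E)`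
invariant: `Q(aw+b)·P(w)·exp(E(aw+b)) = a·Q(w)·P(aw+b)·exp(E(w))` for all `w`. -/
def LeavesInv (Q P E : Polynomial ℂ) (a b : ℂ) : Prop :=
  ∀ w : ℂ,
    Q.eval (a * w + b) * P.eval w * Complex.exp (E.eval (a * w + b)) =
      a * Q.eval w * P.eval (a * w + b) * Complex.exp (E.eval w)

/-- `T(w) = a·w + b` leaves `X` invariant iff `a^(s−r−1) = 1` and
`Q(aw+b) = a^s·Q(w)`, `P(aw+b) = a^r·P(w)`, `E(aw+b) = E(w)` as polynomials;
moreover these conditions imply `a^d = 1`. -/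
theorem stmt1 (s r d : ℕ) (hd : 1 ≤ d) (h2 : 2 ≤ s + r + d)
    (lam : ℂ) (Q P E : Polynomial ℂ) (hX : EData s r d lam Q P E)
    (a b : ℂ) (ha : a ≠ 0) :
    (LeavesInv Q P E a b ↔
      (a ^ ((s : ℤ) - r - 1) = 1 ∧
        Q.comp (C a * X + C b) = C (a ^ s) * Q ∧
        P.comp (C a * X + C b) = C (a ^ r) * P ∧
        E.comp (C a * X + C b) = E))
    ∧
    ((a ^ ((s : ℤ) - r - 1) = 1 ∧
        Q.comp (C a * X + C b) = C (a ^ s) * Q ∧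
        P.comp (C a * X + C b) = C (a ^ r) * P ∧
        E.comp (C a * X + C b) = E) → a ^ d = 1) := by
  obtain ⟨hlam, hQm, hPm, hQd, hPd, hEd, hroot⟩ := hX
  have hQ0 : Q ≠ 0 := hQm.ne_zero
  have hP0 : P ≠ 0 := hPm.ne_zero
  have hE0 : E ≠ 0 := fun h0 => by rw [h0, natDegree_zero] at hEd; omega
  have hLdeg : (C a * X + C b : Polynomial ℂ).natDegree = 1 := natDegree_linear ha
  constructor
  · constructor
    · -- forward direction
      intro hL
      have heval : ∀ w : ℂ, (Q.comp (C a * X + C b) * P).eval w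
          * Complex.exp ((E.comp (C a * X + C b) - E).eval w)
          = (C a * Q * (P.comp (C a * X + C b))).eval w := by
        intro w
        have hexp : Complex.exp (E.eval w) ≠ 0 := Complex.exp_ne_zero _
        simp only [eval_mul, eval_sub, eval_comp, eval_add, eval_C, eval_X, Complex.exp_sub]
        field_simp
        linear_combination hL w
      have hg0 : Q.comp (C a * X + C b) * P ≠ 0 :=
        mul_ne_zero (comp_linear_ne_zero hQ0 ha) hP0
      have hh0 : C a * Q * (P.comp (C a * X + C b)) ≠ 0 :=
        mul_ne_zero (mul_ne_zero (C_ne_zero.mpr ha) hQ0) (comp_linear_ne_zero hP0 ha)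
      have hgh : (Q.comp (C a * X + C b) * P).natDegree
          = (C a * Q * (P.comp (C a * X + C b))).natDegree := by
        rw [natDegree_mul (comp_linear_ne_zero hQ0 ha) hP0,
          natDegree_mul (mul_ne_zero (C_ne_zero.mpr ha) hQ0) (comp_linear_ne_zero hP0 ha),
          natDegree_mul (C_ne_zero.mpr ha) hQ0,
          natDegree_comp, natDegree_comp, hLdeg, natDegree_C]
        omega
      have hFd : derivative (E.comp (C a * X + C b) - E) = 0 :=
        deriv_exp_eq hg0 hh0 hgh heval
      obtain ⟨c0, hEc⟩ : ∃ c0 : ℂ, E.comp (C a * X + C b) = E + C c0 :=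
        ⟨(E.comp (C a * X + C b) - E).coeff 0, by
          have h4 := eq_C_of_derivative_eq_zero hFd
          linear_combination h4⟩
      have hFc : E.comp (C a * X + C b) - E = C c0 := by rw [hEc]; ring
      have hpoly : Q.comp (C a * X + C b) * P * C (Complex.exp c0)
          = C a * Q * (P.comp (C a * X + C b)) := by
        apply Polynomial.funext
        intro w
        have h5 := heval w
        rw [hFc, eval_C] at h5
        simp only [eval_mul, eval_C] at h5 ⊢
        linear_combination h5
      have hcop2 : IsCoprime (Q.comp (C a * X + C b)) (P.comp (C a * X + C b)) := by
        apply coprime_of_no_common_root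
        intro z hz
        simp only [IsRoot, eval_comp, eval_add, eval_mul, eval_C, eval_X] at hz
        exact hroot (a * z + b) hz
      have hdvdQ : Q.comp (C a * X + C b) ∣ Q := by
        have hdvd1 : Q.comp (C a * X + C b) ∣ (C a * Q) * (P.comp (C a * X + C b)) :=
          ⟨P * C (Complex.exp c0), by linear_combination -hpoly⟩
        obtain ⟨u, hu⟩ := hcop2.dvd_of_dvd_mul_right hdvd1
        refine ⟨C a⁻¹ * u, ?_⟩
        have hinv : (C a⁻¹ * C a : Polynomial ℂ) = 1 := by
          rw [← C_mul, inv_mul_cancel₀ ha, C_1]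
        linear_combination C a⁻¹ * hu - Q * hinv
      have hdvdP : P.comp (C a * X + C b) ∣ P := by
        have hdvd1 : P.comp (C a * X + C b) ∣ (P * C (Complex.exp c0)) * (Q.comp (C a * X + C b)) :=
          ⟨C a * Q, by linear_combination hpoly⟩
        obtain ⟨u, hu⟩ := hcop2.symm.dvd_of_dvd_mul_right hdvd1
        refine ⟨C (Complex.exp c0)⁻¹ * u, ?_⟩
        have hinv : (C (Complex.exp c0)⁻¹ * C (Complex.exp c0) : Polynomial ℂ) = 1 := by
          rw [← C_mul, inv_mul_cancel₀ (Complex.exp_ne_zero c0), C_1]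
        linear_combination C (Complex.exp c0)⁻¹ * hu - P * hinv
      have hQc : Q.comp (C a * X + C b) = C (a ^ s) * Q := by
        have := comp_eq_C_mul hQm ha hdvdQ
        rwa [hQd] at this
      have hPc : P.comp (C a * X + C b) = C (a ^ r) * P := by
        have := comp_eq_C_mul hPm ha hdvdP
        rwa [hPd] at this
      rw [hQc, hPc] at hpoly
      have hqp : Q * P ≠ 0 := mul_ne_zero hQ0 hP0
      have h7 : (C (a ^ s) * C (Complex.exp c0) - C a * C (a ^ r)) * (Q * P) = 0 := by
        linear_combination hpoly
      have h8 : a ^ s * Complex.exp c0 = a * a ^ r := by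
        rcases mul_eq_zero.mp h7 with h9 | h9
        · have h10 : C (a ^ s * Complex.exp c0) = C (a * a ^ r) := by
            rw [map_mul, map_mul]; exact sub_eq_zero.mp h9
          exact C_injective h10
        · exact absurd h9 hqp
      have hc00 : c0 = 0 := by
        by_cases hA : a = 1
        · subst hA
          by_cases hb : b = 0
          · subst hb
            have h11 : E.comp (C (1:ℂ) * X + C 0) = E := by simp
            rw [h11] at hEc
            have h12 : C c0 = 0 := by linear_combination -hEc
            exact C_eq_zero.mp h12
          · exfalso
            have hLX : (C (1:ℂ) * X + C b) = X + C b := by rw [C_1, one_mul]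
            rw [hLX] at hEc hQc hPc
            by_cases hd2 : 2 ≤ d
            · have hder : (derivative E).comp (X + C b) = derivative E := by
                have h13 := congrArg derivative hEc
                simp only [derivative_comp, derivative_add, derivative_X, derivative_C,
                  add_zero, one_mul] at h13
                exact h13
              apply no_shift_fix hb _ hder
              intro h0
              have hcoef : (derivative E).coeff (d - 1) ≠ 0 := by
                rw [coeff_derivative]
                have he1 : d - 1 + 1 = d := by omega
                rw [he1]
                apply mul_ne_zero
                · rw [← hEd, coeff_natDegree]
                  exact leadingCoeff_ne_zero.mpr hE0
                · exact Nat.cast_add_one_ne_zero (d - 1)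
              apply hcoef
              apply coeff_eq_zero_of_natDegree_lt
              rw [h0]; omega
            · have hd1 : d = 1 := by omega
              rcases Nat.eq_zero_or_pos s with hs | hs
              · have hr : r ≠ 0 := by omega
                apply no_shift_fix hb (show P.natDegree ≠ 0 by rw [hPd]; exact hr)
                rw [hPc, one_pow, map_one, one_mul]
              · apply no_shift_fix hb (show Q.natDegree ≠ 0 by rw [hQd]; omega)
                rw [hQc, one_pow, map_one, one_mul]
        · have hA' : (1 : ℂ) - a ≠ 0 := sub_ne_zero.mpr (Ne.symm hA)
          have h11 := congrArg (eval (b / (1 - a))) hEc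
          simp only [eval_comp, eval_add, eval_mul, eval_C, eval_X] at h11
          have h12 : a * (b / (1 - a)) + b = b / (1 - a) := by
            field_simp
            ring
          rw [h12] at h11
          exact left_eq_add.mp h11
      rw [hc00, Complex.exp_zero, mul_one] at h8
      rw [hc00, map_zero, add_zero] at hEc
      refine ⟨?_, hQc, hPc, hEc⟩
      have hz : a ^ ((s : ℤ) - r - 1) = a ^ (s : ℤ) / (a ^ (r : ℤ) * a ^ (1 : ℤ)) := by
        rw [zpow_sub₀ ha, zpow_sub₀ ha, div_div]
      rw [hz, zpow_natCast, zpow_natCast, zpow_one, h8]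
      rw [mul_comm (a ^ r) a]
      exact div_self (mul_ne_zero ha (pow_ne_zero r ha))
    · -- reverse direction
      rintro ⟨h1, hQc, hPc, hEc⟩
      intro w
      have hQe : Q.eval (a * w + b) = a ^ s * Q.eval w := by
        have h3 := congrArg (eval w) hQc
        simpa only [eval_comp, eval_mul, eval_add, eval_C, eval_X] using h3
      have hPe : P.eval (a * w + b) = a ^ r * P.eval w := by
        have h3 := congrArg (eval w) hPc
        simpa only [eval_comp, eval_mul, eval_add, eval_C, eval_X] using h3
      have hEe : E.eval (a * w + b) = E.eval w := by
        have h3 := congrArg (eval w) hEc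
        simpa only [eval_comp, eval_mul, eval_add, eval_C, eval_X] using h3
      have has : a ^ s = a ^ r * a := by
        have hz : a ^ (s : ℤ) = a ^ (r : ℤ) * a ^ (1 : ℤ) * a ^ ((s : ℤ) - r - 1) := by
          rw [← zpow_add₀ ha, ← zpow_add₀ ha]
          congr 1
          omega
        rw [h1, mul_one, zpow_one, zpow_natCast, zpow_natCast] at hz
        exact hz
      rw [hQe, hPe, hEe, has]
      ring
  · -- second conjunct
    rintro ⟨h1, hQc, hPc, hEc⟩
    have h3 := congrArg leadingCoeff hEc
    rw [leadingCoeff_comp (by rw [hLdeg]; exact one_ne_zero), leadingCoeff_linear ha, hEd] at h3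
    have hlc : E.leadingCoeff ≠ 0 := leadingCoeff_ne_zero.mpr hE0
    exact mul_left_cancel₀ hlc (by rw [mul_one]; exact h3)
end
end

section
/- Let s, r ≥ 0 and d ≥ 1 be integers with s + r + d ≥ 2 and gcd(d, s − r − 1) = 1 (the greatest common divisor of d and |s − r − 1| in ℤ). Then for every X ∈ E(s,r,d), the only affine map leaving X invariant is the identity T(w) = w; that is, the isotropy group of every X ∈ E(s,r,d) is trivial. -/
open Polynomial

noncomputable section

/-- A polynomial whose evaluation is periodic with nonzero period is constant. -/
private lemma natDegree_eq_zero_of_periodic (p : Polynomial ℂ) (b : ℂ) (hb : b ≠ 0)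
    (h : ∀ w : ℂ, p.eval (w + b) = p.eval w) : p.natDegree = 0 := by
  have hroot : ∀ n : ℕ, (p - C (p.eval 0)).IsRoot (n * b) := by
    intro n
    induction n with
    | zero => simp [IsRoot.def]
    | succ n ih =>
      have h1 := h ((n : ℂ) * b)
      simp only [IsRoot.def, eval_sub, eval_C, sub_eq_zero] at ih ⊢
      have : ((n : ℂ) + 1) * b = (n : ℂ) * b + b := by ring
      rw [Nat.cast_add, Nat.cast_one, this, h1, ih]
  have hzero : p - C (p.eval 0) = 0 := by
    apply eq_zero_of_infinite_isRoot
    apply Set.infinite_of_injective_forall_mem (f := fun n : ℕ => (n : ℂ) * b)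
    · intro n m hnm
      have : (n : ℂ) = m := mul_right_cancel₀ hb hnm
      exact_mod_cast this
    · intro n; exact hroot n
  have : p = C (p.eval 0) := by rwa [sub_eq_zero] at hzero
  rw [this]; exact natDegree_C _

/-- If `A(w)·exp(G(w)) = B(w)` for all `w` with `A, B ≠ 0`, then `G` is constant. -/
private lemma derivative_eq_zero_of_exp_eq (A B G : Polynomial ℂ) (hA : A ≠ 0) (hB : B ≠ 0)
    (h : ∀ w : ℂ, A.eval w * Complex.exp (G.eval w) = B.eval w) :
    G.derivative = 0 := by
  by_contra hg
  -- pointwise derivative identity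
  have hder : ∀ w : ℂ, B.derivative.eval w =
      A.derivative.eval w * Complex.exp (G.eval w)
        + A.eval w * (Complex.exp (G.eval w) * G.derivative.eval w) := by
    intro w
    have h1 : HasDerivAt (fun z : ℂ => A.eval z * Complex.exp (G.eval z))
        (A.derivative.eval w * Complex.exp (G.eval w)
          + A.eval w * (Complex.exp (G.eval w) * G.derivative.eval w)) w :=
      (A.hasDerivAt w).mul ((G.hasDerivAt w).cexp)
    have h2 : HasDerivAt (fun z : ℂ => A.eval z * Complex.exp (G.eval z))
        (B.derivative.eval w) w := by
      have he : (fun z : ℂ => A.eval z * Complex.exp (G.eval z)) = fun z => B.eval z :=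
        funext h
      rw [he]
      exact B.hasDerivAt w
    exact h2.unique h1
  -- polynomial identity B' * A = (A' + A*G') * B
  have hpoly : B.derivative * A = (A.derivative + A * G.derivative) * B := by
    apply Polynomial.funext
    intro w
    simp only [eval_mul, eval_add]
    calc B.derivative.eval w * A.eval w
        = (A.derivative.eval w + A.eval w * G.derivative.eval w)
            * (A.eval w * Complex.exp (G.eval w)) := by rw [hder w]; ring
      _ = (A.derivative.eval w + A.eval w * G.derivative.eval w) * B.eval w := by rw [h w]
  have key : A * G.derivative * B = B.derivative * A - A.derivative * B := by
    linear_combination -hpoly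
  -- degree contradiction
  have hAGB : A * G.derivative * B ≠ 0 := mul_ne_zero (mul_ne_zero hA hg) hB
  have hAbot : A.degree ≠ ⊥ := by rwa [Ne, degree_eq_bot]
  have hBbot : B.degree ≠ ⊥ := by rwa [Ne, degree_eq_bot]
  have hgd : (0 : WithBot ℕ) ≤ G.derivative.degree := zero_le_degree_iff.mpr hg
  have hdeg : (A * G.derivative * B).degree = A.degree + G.derivative.degree + B.degree := by
    rw [degree_mul, degree_mul]
  have hle : A.degree + B.degree ≤ (A * G.derivative * B).degree := by
    rw [hdeg]
    calc A.degree + B.degree = A.degree + 0 + B.degree := by rw [add_zero]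
      _ ≤ A.degree + G.derivative.degree + B.degree := by
          gcongr
  have h1 : (B.derivative * A).degree < (A * G.derivative * B).degree := by
    calc (B.derivative * A).degree = B.derivative.degree + A.degree := degree_mul
      _ < B.degree + A.degree := WithBot.add_lt_add_right hAbot (degree_derivative_lt hB)
      _ = A.degree + B.degree := add_comm _ _
      _ ≤ _ := hle
  have h2 : (A.derivative * B).degree < (A * G.derivative * B).degree := by
    calc (A.derivative * B).degree = A.derivative.degree + B.degree := degree_mul
      _ < A.degree + B.degree := WithBot.add_lt_add_right hBbot (degree_derivative_lt hA)
      _ ≤ _ := hle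
  have h3 : (A * G.derivative * B).degree < (A * G.derivative * B).degree := by
    calc (A * G.derivative * B).degree
        = (B.derivative * A - A.derivative * B).degree := by rw [key]
      _ ≤ max (B.derivative * A).degree (A.derivative * B).degree := degree_sub_le _ _
      _ < (A * G.derivative * B).degree := max_lt h1 h2
  exact absurd h3 (lt_irrefl _)

/-- if `gcd(d, s−r−1) = 1` then every `X ∈ E(s,r,d)` has trivial
isotropy group: the only affine map leaving `X` invariant is the identity. -/
theorem stmt5 (s r d : ℕ) (hd : 1 ≤ d) (h2 : 2 ≤ s + r + d)
    (hgcd : Int.gcd (d : ℤ) ((s : ℤ) - r - 1) = 1)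
    (lam : ℂ) (Q P E : Polynomial ℂ) (hX : EData s r d lam Q P E)
    (a b : ℂ) (ha : a ≠ 0) (hinv : LeavesInv Q P E a b) :
    a = 1 ∧ b = 0 := by
  obtain ⟨hlam, hQ, hP, hs, hr, hdE, hroots⟩ := hX
  have hQ0 : Q ≠ 0 := hQ.ne_zero
  have hP0 : P ≠ 0 := hP.ne_zero
  have hElead : E.leadingCoeff ≠ 0 := by
    rw [Ne, leadingCoeff_eq_zero]
    intro hE0
    rw [hE0, natDegree_zero] at hdE
    omega
  set t : Polynomial ℂ := C a * X + C b with ht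
  have htdeg : t.natDegree = 1 := natDegree_linear ha
  have htlead : t.leadingCoeff = a := leadingCoeff_linear ha
  have hteval : ∀ w : ℂ, t.eval w = a * w + b := by intro w; simp [ht]
  set Qt := Q.comp t with hQt
  set Pt := P.comp t with hPt
  set Et := E.comp t with hEt
  have htd1 : t.natDegree ≠ 0 := by rw [htdeg]; norm_num
  have hQtlead : Qt.leadingCoeff = a ^ s := by
    rw [hQt, leadingCoeff_comp htd1, hQ.leadingCoeff, one_mul, htlead, hs]
  have hPtlead : Pt.leadingCoeff = a ^ r := by
    rw [hPt, leadingCoeff_comp htd1, hP.leadingCoeff, one_mul, htlead, hr]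
  have hQt0 : Qt ≠ 0 := leadingCoeff_ne_zero.mp (by rw [hQtlead]; exact pow_ne_zero s ha)
  have hPt0 : Pt ≠ 0 := leadingCoeff_ne_zero.mp (by rw [hPtlead]; exact pow_ne_zero r ha)
  -- the basic functional equation in the form A · exp G = B
  have hfun : ∀ w : ℂ,
      (Qt * P).eval w * Complex.exp ((Et - E).eval w) = (C a * Q * Pt).eval w := by
    intro w
    have h0 := hinv w
    have e1 : Qt.eval w = Q.eval (a * w + b) := by rw [hQt, eval_comp, hteval]
    have e2 : Pt.eval w = P.eval (a * w + b) := by rw [hPt, eval_comp, hteval]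
    have e3 : Et.eval w = E.eval (a * w + b) := by rw [hEt, eval_comp, hteval]
    have hne : Complex.exp (E.eval w) ≠ 0 := Complex.exp_ne_zero _
    simp only [eval_mul, eval_sub, eval_C, Complex.exp_sub]
    rw [e1, e2, e3]
    field_simp
    linear_combination h0
  have hA0 : Qt * P ≠ 0 := mul_ne_zero hQt0 hP0
  have hB0 : C a * Q * Pt ≠ 0 :=
    mul_ne_zero (mul_ne_zero (by rwa [Ne, C_eq_zero]) hQ0) hPt0
  have hGder : (Et - E).derivative = 0 :=
    derivative_eq_zero_of_exp_eq _ _ _ hA0 hB0 hfun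
  set c := (Et - E).coeff 0 with hc
  have hGC : Et - E = C c := eq_C_of_derivative_eq_zero hGder
  have hEtE : Et = E + C c := by linear_combination (norm := ring_nf) hGC
  -- polynomial identity
  have hid : Qt * P * C (Complex.exp c) = C a * Q * Pt := by
    apply Polynomial.funext
    intro w
    have h0 := hfun w
    rw [hGC, eval_C] at h0
    simpa [eval_mul, eval_C] using h0
  -- a ^ d = 1
  have hEtlead : Et.leadingCoeff = E.leadingCoeff * a ^ d := by
    rw [hEt, leadingCoeff_comp htd1, htlead, hdE]
  have hEtdeg : Et.natDegree = d := by
    rw [hEt, natDegree_comp, htdeg, hdE, mul_one]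
  have had : a ^ d = 1 := by
    have h1 : Et.coeff d = E.coeff d := by
      rw [hEtE, coeff_add, coeff_C, if_neg (by omega)]
      ring
    rw [← hEtdeg, coeff_natDegree, hEtlead, hEtdeg, ← hdE, coeff_natDegree] at h1
    have := mul_left_cancel₀ hElead (h1.trans (mul_one E.leadingCoeff).symm)
    rwa [hdE] at this
  -- coprimality and Q ∣ Qt
  have hcop : IsCoprime Q P := by
    rw [isCoprime_iff_aeval_ne_zero_of_isAlgClosed (k := ℂ) ℂ Q P]
    intro z
    have := hroots z
    simp only [coe_aeval_eq_eval, IsRoot.def] at this ⊢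
    tauto
  have hcopC : IsCoprime Q (C (Complex.exp c)) := by
    refine ⟨0, C (Complex.exp c)⁻¹, ?_⟩
    rw [zero_mul, zero_add, ← C_mul, inv_mul_cancel₀ (Complex.exp_ne_zero c), C_1]
  have hQdvd : Q ∣ Qt := by
    have h1 : Q ∣ Qt * (P * C (Complex.exp c)) := by
      refine ⟨C a * Pt, ?_⟩
      rw [← mul_assoc, hid]; ring
    exact (hcop.mul_right hcopC).dvd_of_dvd_mul_right h1
  obtain ⟨k, hk⟩ := hQdvd
  have hQtdeg : Qt.natDegree = s := by rw [hQt, natDegree_comp, htdeg, hs, mul_one]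
  have hk0 : k ≠ 0 := by rintro rfl; rw [mul_zero] at hk; exact hQt0 hk
  have hkdeg : k.natDegree = 0 := by
    have := natDegree_mul hQ0 hk0
    rw [← hk, hQtdeg, hs] at this
    omega
  have hkC : k = C (k.coeff 0) := eq_C_of_natDegree_eq_zero hkdeg
  have hkval : k.coeff 0 = a ^ s := by
    have h1 := congrArg leadingCoeff hk
    rw [hQtlead, hkC, leadingCoeff_mul, hQ.leadingCoeff, one_mul, leadingCoeff_C] at h1
    exact h1.symm
  have hQteq : Qt = C (a ^ s) * Q := by rw [hk, hkC, hkval]; ring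
  -- cancel Q and compare leading coefficients
  have hPeq : C (a ^ s * Complex.exp c) * P = C a * Pt := by
    apply mul_left_cancel₀ hQ0
    rw [C_mul]
    linear_combination hid - P * C (Complex.exp c) * hQteq
  have hkey : a ^ s * Complex.exp c = a * a ^ r := by
    have h1 := congrArg leadingCoeff hPeq
    rwa [leadingCoeff_mul, leadingCoeff_mul, leadingCoeff_C, leadingCoeff_C,
      hP.leadingCoeff, mul_one, hPtlead] at h1
  -- Step 1 : a = 1
  have ha1 : a = 1 := by
    by_contra hA1
    have hsub : (1 : ℂ) - a ≠ 0 := sub_ne_zero.mpr (Ne.symm hA1)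
    set w0 : ℂ := b / (1 - a) with hw0
    have hfix : a * w0 + b = w0 := by
      rw [hw0]
      field_simp
      ring
    have hc0 : c = 0 := by
      have h1 : Et.eval w0 = E.eval w0 := by rw [hEt, eval_comp, hteval, hfix]
      have h2 := congrArg (eval w0) hEtE
      rw [h1, eval_add, eval_C, left_eq_add] at h2
      exact h2
    have hsr : a ^ s = a ^ (r + 1) := by
      rw [hc0, Complex.exp_zero, mul_one] at hkey
      rw [hkey, pow_succ]
      ring
    have hz1 : a ^ ((s : ℤ) - r - 1) = 1 := by
      have hzz : a ^ ((s : ℤ)) = a ^ ((r : ℤ) + 1) := by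
        rw [show ((r : ℤ) + 1) = ((r + 1 : ℕ) : ℤ) by push_cast; ring,
          zpow_natCast, zpow_natCast]
        exact hsr
      have heq : (s : ℤ) - r - 1 = (s : ℤ) - ((r : ℤ) + 1) := by ring
      rw [heq, zpow_sub₀ ha, hzz, div_self (zpow_ne_zero _ ha)]
    have hz2 : a ^ ((d : ℤ)) = 1 := by rw [zpow_natCast]; exact had
    have hbez := Int.gcd_eq_gcd_ab (d : ℤ) ((s : ℤ) - r - 1)
    rw [hgcd] at hbez
    have : a = 1 := by
      calc a = a ^ (1 : ℤ) := (zpow_one a).symm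
        _ = a ^ ((d : ℤ) * Int.gcdA (d : ℤ) ((s : ℤ) - r - 1)
              + ((s : ℤ) - r - 1) * Int.gcdB (d : ℤ) ((s : ℤ) - r - 1)) := by
            rw [← hbez]; norm_num
        _ = (a ^ ((d : ℤ))) ^ (Int.gcdA (d : ℤ) ((s : ℤ) - r - 1))
              * (a ^ ((s : ℤ) - r - 1)) ^ (Int.gcdB (d : ℤ) ((s : ℤ) - r - 1)) := by
            rw [zpow_add₀ ha, zpow_mul, zpow_mul]
        _ = 1 := by rw [hz1, hz2]; simp
    exact hA1 this
  subst ha1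
  refine ⟨rfl, ?_⟩
  by_contra hb
  -- now a = 1 ; show the contradiction
  have hec : Complex.exp c = 1 := by simpa using hkey
  have hQper : ∀ w : ℂ, Q.eval (w + b) = Q.eval w := by
    intro w
    have h1 : Qt.eval w = Q.eval (1 * w + b) := by rw [hQt, eval_comp, hteval]
    rw [hQteq] at h1
    simpa using h1.symm
  have hs0 : s = 0 := by rw [← hs]; exact natDegree_eq_zero_of_periodic Q b hb hQper
  have hPeq1 : Pt = P := by
    have h := hPeq
    simp [hec] at h
    exact h.symm
  have hPper : ∀ w : ℂ, P.eval (w + b) = P.eval w := by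
    intro w
    have h1 : Pt.eval w = P.eval (1 * w + b) := by rw [hPt, eval_comp, hteval]
    rw [hPeq1, one_mul] at h1
    exact h1.symm
  have hr0 : r = 0 := by rw [← hr]; exact natDegree_eq_zero_of_periodic P b hb hPper
  -- E.derivative is periodic
  have htder : derivative t = 1 := by
    rw [ht]; simp
  have hEder : derivative E = (derivative E).comp t := by
    have h1 : derivative Et = derivative E := by rw [hEtE]; simp
    rw [hEt, derivative_comp, htder, one_mul] at h1
    exact h1.symm
  have hEper : ∀ w : ℂ, (derivative E).eval (w + b) = (derivative E).eval w := by
    intro w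
    conv_rhs => rw [hEder]
    rw [eval_comp, hteval, one_mul]
  have hE'deg : (derivative E).natDegree = 0 :=
    natDegree_eq_zero_of_periodic _ b hb hEper
  have hE'C : derivative E = C ((derivative E).coeff 0) :=
    eq_C_of_natDegree_eq_zero hE'deg
  have hd1 : E.natDegree ≤ 1 := by
    have h1 : derivative (E - C ((derivative E).coeff 0) * X) = 0 := by
      rw [derivative_sub]
      simp only [derivative_mul, derivative_C, derivative_X, zero_mul, mul_one, zero_add]
      rw [← hE'C, sub_self]
    have h2 := eq_C_of_derivative_eq_zero h1
    have h3 : E = C ((derivative E).coeff 0) * X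
        + C ((E - C ((derivative E).coeff 0) * X).coeff 0) := by
      linear_combination (norm := ring_nf) h2
    rw [h3]
    exact natDegree_linear_le
  rw [hdE] at hd1
  omega
end
end
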